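/- Let A ∈ ℝ^{d×k} have all rows of unit norm, and let V be a k-dimensional random vector with E[V] = 0 and covariance matrix I_k such that each component of AV is uniformly distributed on [-√3, √3]. Then the Pearson correlation matrix of AV equals AAᵀ, and hence AAᵀ is a Spearman's rho matrix. -/

import Mathlib

open MeasureTheory
open scoped Matrix

/-- The uniform (normalized Lebesgue) probability measure on the interval `[a, b]`. -/
noncomputable def uniformIcc (a b : ℝ) : Measure ℝ :=
  (ENNReal.ofReal (b - a))⁻¹ • volume.restrict (Set.Icc a b)

/-- `R` is a Spearman's rho matrix if there is a random vector `X` with continuous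
marginal distributions whose matrix of pairwise Spearman rank correlations
`12 * E[F_i(X_i) F_j(X_j)] - 3` is `R`, where `F_i` is the cdf of `X_i`. -/
def IsSpearmanMatrix {d : ℕ} (R : Matrix (Fin d) (Fin d) ℝ) : Prop :=
  ∃ (Ω : Type) (_ : MeasurableSpace Ω) (μ : Measure Ω) (_ : IsProbabilityMeasure μ)
    (X : Ω → Fin d → ℝ),
    (∀ i, Measurable fun ω => X ω i) ∧
    (∀ i (x : ℝ), Measure.map (fun ω => X ω i) μ {x} = 0) ∧
    ∀ i j, R i j =
      12 * (∫ ω, ProbabilityTheory.cdf (Measure.map (fun ω' => X ω' i) μ) (X ω i) *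
        ProbabilityTheory.cdf (Measure.map (fun ω' => X ω' j) μ) (X ω j) ∂μ) - 3

section Aux

lemma aux_mul_integrable {Ω : Type*} [MeasurableSpace Ω] {μ : Measure Ω} {f g : Ω → ℝ}
    (hf : MemLp f 2 μ) (hg : MemLp g 2 μ) :
    Integrable (fun ω => f ω * g ω) μ := by
  rw [← memLp_one_iff_integrable]
  have := hg.smul hf (p := 2) (q := 2) (r := 1)
  exact this

lemma aux_sqrt3_pos : (0:ℝ) < Real.sqrt 3 := Real.sqrt_pos.2 (by norm_num)

lemma aux_uniformIcc_apply (s : Set ℝ) (hs : MeasurableSet s) :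
    uniformIcc (-Real.sqrt 3) (Real.sqrt 3) s
      = (ENNReal.ofReal (2 * Real.sqrt 3))⁻¹
        * volume (s ∩ Set.Icc (-Real.sqrt 3) (Real.sqrt 3)) := by
  have h : Real.sqrt 3 - -Real.sqrt 3 = 2 * Real.sqrt 3 := by ring
  simp [uniformIcc, Measure.restrict_apply hs, h]

lemma aux_uniformIcc_isProb :
    IsProbabilityMeasure (uniformIcc (-Real.sqrt 3) (Real.sqrt 3)) := by
  constructor
  rw [aux_uniformIcc_apply _ MeasurableSet.univ, Set.univ_inter, Real.volume_Icc]
  have h : Real.sqrt 3 - -Real.sqrt 3 = 2 * Real.sqrt 3 := by ring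
  rw [h]
  exact ENNReal.inv_mul_cancel
    (by simp [ENNReal.ofReal_pos.2 (by positivity : (0:ℝ) < 2 * Real.sqrt 3)])
    ENNReal.ofReal_ne_top

lemma aux_uniformIcc_singleton (x : ℝ) :
    uniformIcc (-Real.sqrt 3) (Real.sqrt 3) {x} = 0 := by
  rw [aux_uniformIcc_apply _ (measurableSet_singleton x)]
  have : volume ({x} ∩ Set.Icc (-Real.sqrt 3) (Real.sqrt 3)) = 0 :=
    measure_mono_null Set.inter_subset_left (by simp)
  simp [this]

lemma aux_cdf_uniform {x : ℝ} (hx : x ∈ Set.Icc (-Real.sqrt 3) (Real.sqrt 3)) :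
    ProbabilityTheory.cdf (uniformIcc (-Real.sqrt 3) (Real.sqrt 3)) x
      = (x + Real.sqrt 3) / (2 * Real.sqrt 3) := by
  have := aux_uniformIcc_isProb
  rw [ProbabilityTheory.cdf_eq_real, measureReal_def, aux_uniformIcc_apply _ measurableSet_Iic]
  have hset : Set.Iic x ∩ Set.Icc (-Real.sqrt 3) (Real.sqrt 3)
      = Set.Icc (-Real.sqrt 3) x := by
    ext y
    simp only [Set.mem_inter_iff, Set.mem_Iic, Set.mem_Icc]
    constructor
    · rintro ⟨h1, h2, _⟩; exact ⟨h2, h1⟩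
    · rintro ⟨h1, h2⟩; exact ⟨h2, h1, h2.trans hx.2⟩
  rw [hset, Real.volume_Icc]
  have h1 : x - -Real.sqrt 3 = x + Real.sqrt 3 := by ring
  have h2 : (0:ℝ) ≤ x + Real.sqrt 3 := by linarith [hx.1]
  rw [h1, ENNReal.toReal_mul, ENNReal.toReal_inv, ENNReal.toReal_ofReal (by positivity),
    ENNReal.toReal_ofReal h2, inv_mul_eq_div]

end Aux

/-- If A has unit-norm rows and V has mean 0 and covariance I_k with each component of AV
uniform on [-√3, √3], then the Pearson correlation matrix of AV is AAᵀ, and AAᵀ is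
a Spearman's rho matrix. -/
theorem pearson_of_uniform_projections {Ω : Type*} [MeasurableSpace Ω] (μ : Measure Ω)
    [IsProbabilityMeasure μ] {d k : ℕ} (A : Matrix (Fin d) (Fin k) ℝ)
    (hArows : ∀ i, ∑ j : Fin k, (A i j) ^ 2 = 1)
    (V : Ω → Fin k → ℝ) (hVmeas : ∀ j, Measurable fun ω => V ω j)
    (hVL2 : ∀ j, MemLp (fun ω => V ω j) 2 μ)
    (hmean : ∀ j, (∫ ω, V ω j ∂μ) = 0)
    (hcov : ∀ j l, (∫ ω, V ω j * V ω l ∂μ) = if j = l then 1 else 0)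
    (huni : ∀ i : Fin d,
      Measure.map (fun ω => ∑ j : Fin k, A i j * V ω j) μ
        = uniformIcc (-Real.sqrt 3) (Real.sqrt 3)) :
    (∀ i i' : Fin d,
      (∫ ω, (∑ j : Fin k, A i j * V ω j) * (∑ j : Fin k, A i' j * V ω j) ∂μ)
        = (A * Aᵀ) i i') ∧
    IsSpearmanMatrix (A * Aᵀ) := by
  set s := Real.sqrt 3 with hs
  have hspos : (0:ℝ) < s := aux_sqrt3_pos
  have hs2 : s * s = 3 := Real.mul_self_sqrt (by norm_num)
  have hintVV : ∀ j l, Integrable (fun ω => V ω j * V ω l) μ :=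
    fun j l => aux_mul_integrable (hVL2 j) (hVL2 l)
  -- Part 1
  have part1 : ∀ i i' : Fin d,
      (∫ ω, (∑ j : Fin k, A i j * V ω j) * (∑ j : Fin k, A i' j * V ω j) ∂μ)
        = (A * Aᵀ) i i' := by
    intro i i'
    have h1 : (fun ω => (∑ j : Fin k, A i j * V ω j) * (∑ j : Fin k, A i' j * V ω j))
        = fun ω => ∑ j : Fin k, ∑ l : Fin k, (A i j * A i' l) * (V ω j * V ω l) := by
      funext ω
      rw [Finset.sum_mul_sum]
      refine Finset.sum_congr rfl fun j _ => Finset.sum_congr rfl fun l _ => by ring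
    rw [h1, integral_finset_sum _ (fun j _ => integrable_finset_sum _
      (fun l _ => (hintVV j l).const_mul _))]
    have h2 : ∀ j : Fin k,
        (∫ ω, ∑ l : Fin k, (A i j * A i' l) * (V ω j * V ω l) ∂μ)
          = A i j * A i' j := by
      intro j
      rw [integral_finset_sum _ (fun l _ => (hintVV j l).const_mul _)]
      simp_rw [integral_const_mul, hcov]
      simp
    simp_rw [h2]
    simp [Matrix.mul_apply, Matrix.transpose_apply]
  refine ⟨part1, ?_⟩
  -- Part 2
  set X : Ω → Fin d → ℝ := fun ω i => ∑ j : Fin k, A i j * V ω j with hX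
  have hXmeas : ∀ i, Measurable fun ω => X ω i :=
    fun i => Finset.measurable_sum _ fun j _ => (hVmeas j).const_mul _
  have hXL2 : ∀ i, MemLp (fun ω => X ω i) 2 μ := by
    intro i
    exact memLp_finset_sum _ (fun j _ => (hVL2 j).const_mul _)
  have hXint : ∀ i, Integrable (fun ω => X ω i) μ :=
    fun i => (hXL2 i).integrable one_le_two
  have hXmean : ∀ i, (∫ ω, X ω i ∂μ) = 0 := by
    intro i
    simp only [hX]
    rw [integral_finset_sum _ (fun j _ => ((hVL2 j).integrable one_le_two).const_mul _)]
    simp [integral_const_mul, hmean]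
  have hmap : ∀ i, Measure.map (fun ω => X ω i) μ = uniformIcc (-s) s := fun i => huni i
  have hae : ∀ i, ∀ᵐ ω ∂μ, X ω i ∈ Set.Icc (-s) s := by
    intro i
    have h0 : μ ((fun ω => X ω i) ⁻¹' (Set.Icc (-s) s)ᶜ) = 0 := by
      rw [← Measure.map_apply (hXmeas i) measurableSet_Icc.compl, hmap i,
        aux_uniformIcc_apply _ measurableSet_Icc.compl]
      simp [← hs, Set.compl_inter_self]
    rw [ae_iff]
    exact h0
  have key : ∀ i i' : Fin d,
      (∫ ω, ProbabilityTheory.cdf (Measure.map (fun ω' => X ω' i) μ) (X ω i) *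
        ProbabilityTheory.cdf (Measure.map (fun ω' => X ω' i') μ) (X ω i') ∂μ)
        = ((A * Aᵀ) i i' + 3) / 12 := by
    intro i i'
    have hcongr : (fun ω => ProbabilityTheory.cdf (Measure.map (fun ω' => X ω' i) μ) (X ω i) *
          ProbabilityTheory.cdf (Measure.map (fun ω' => X ω' i') μ) (X ω i'))
        =ᵐ[μ] fun ω => ((X ω i + s) / (2 * s)) * ((X ω i' + s) / (2 * s)) := by
      filter_upwards [hae i, hae i'] with ω h1 h2
      rw [hmap i, hmap i', aux_cdf_uniform h1, aux_cdf_uniform h2]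
    rw [integral_congr_ae hcongr]
    have hexp : (fun ω => ((X ω i + s) / (2 * s)) * ((X ω i' + s) / (2 * s)))
        = fun ω => (1 / 12) * (X ω i * X ω i' + (s * X ω i + (s * X ω i' + s * s))) := by
      funext ω
      have h12 : (2 * s) * (2 * s) = 12 := by nlinarith
      field_simp
      linear_combination (-4 * (X ω i + s) * (X ω i' + s)) * hs2
    rw [hexp]
    have hint1 : Integrable (fun ω => X ω i * X ω i') μ :=
      aux_mul_integrable (hXL2 i) (hXL2 i')
    have hint3 : Integrable (fun ω => s * X ω i' + s * s) μ :=
      ((hXint i').const_mul s).add (integrable_const _)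
    have hint2 : Integrable (fun ω => s * X ω i + (s * X ω i' + s * s)) μ :=
      ((hXint i).const_mul s).add hint3
    have e2 : (∫ ω, (s * X ω i' + s * s) ∂μ)
        = (∫ ω, s * X ω i' ∂μ) + (∫ _ω, (s * s : ℝ) ∂μ) :=
      integral_add ((hXint i').const_mul s) (integrable_const _)
    have e1 : (∫ ω, (s * X ω i + (s * X ω i' + s * s)) ∂μ)
        = (∫ ω, s * X ω i ∂μ) + (∫ ω, (s * X ω i' + s * s) ∂μ) :=
      integral_add ((hXint i).const_mul s) hint3
    have e0 : (∫ ω, (X ω i * X ω i' + (s * X ω i + (s * X ω i' + s * s))) ∂μ)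
        = (∫ ω, X ω i * X ω i' ∂μ) + (∫ ω, (s * X ω i + (s * X ω i' + s * s)) ∂μ) :=
      integral_add hint1 hint2
    rw [integral_const_mul, e0, e1, e2, integral_const_mul, integral_const_mul,
      hXmean i, hXmean i', integral_const]
    have := part1 i i'
    simp only [hX] at this ⊢
    rw [this]
    simp [hs2]
    ring
  have hXm : Measurable X := measurable_pi_lambda _ hXmeas
  have hcomp : ∀ i : Fin d, Measure.map (fun x : Fin d → ℝ => x i) (Measure.map X μ)
      = Measure.map (fun ω => X ω i) μ := by
    intro i
    rw [Measure.map_map (measurable_pi_apply i) hXm]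
    rfl
  refine ⟨(Fin d → ℝ), inferInstance, Measure.map X μ,
    Measure.isProbabilityMeasure_map hXm.aemeasurable, id, fun i => measurable_pi_apply i, ?_, ?_⟩
  · intro i x
    simp only [id_eq]
    rw [hcomp i, hmap i]
    exact aux_uniformIcc_singleton x
  · intro i i'
    simp only [id_eq]
    rw [hcomp i, hcomp i']
    have hmeas : AEStronglyMeasurable (fun x : Fin d → ℝ =>
        ProbabilityTheory.cdf (Measure.map (fun ω => X ω i) μ) (x i) *
        ProbabilityTheory.cdf (Measure.map (fun ω => X ω i') μ) (x i'))
        (Measure.map X μ) :=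
      (((ProbabilityTheory.monotone_cdf _).measurable.comp (measurable_pi_apply i)).mul
        ((ProbabilityTheory.monotone_cdf _).measurable.comp
          (measurable_pi_apply i'))).aestronglyMeasurable
    rw [integral_map hXm.aemeasurable hmeas, key i i']
    field_simp
    ring
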